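/- Let K₊ = {a/g ∈ ℂ(q,λ) : a, g ∈ ℂ[q,λ], g(ζ,0) ≠ 0 for every root of unity ζ} and K₋ = {a/(f₀·f₁) ∈ ℂ(q,λ) : a ∈ ℂ[q,λ], f₀(q) = ∏_{s=1}^{N} (1 − ζ_s q) with each ζ_s a root of unity, f₁ ∈ ℂ[λ] with f₁(0) ≠ 0, and deg_q a < N}. Then K₊ ∩ K₋ = {0}, and every element of ℂ(q,λ) of the form a/(g·f₀·f₁), with a ∈ ℂ[q,λ] and g, f₀, f₁ as above, is the sum of an element of K₊ and an element of K₋; in other words, the localization S⁻¹ℂ[q,λ] decomposes as the direct sum K₊ ⊕ K₋ of ℂ-vector spaces. -/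

import Mathlib

open Polynomial

noncomputable section

/-- A complex number is a root of unity if some positive power of it equals `1`. -/
def IsRootOfUnity (ζ : ℂ) : Prop := ∃ n : ℕ, 0 < n ∧ ζ ^ n = 1

/-- The polynomial ring `ℂ[q,λ]`, realized as polynomials in `λ` (the outer variable) with
coefficients in `ℂ[q]` (the inner variable). -/
abbrev QL := Polynomial (Polynomial ℂ)

/-- The field `ℂ(q,λ)` of rational functions in two variables. -/
abbrev QLField := FractionRing QL

/-- A polynomial in the variable `q` alone, viewed in `ℂ[q,λ]`. -/
noncomputable def ofQ (p : Polynomial ℂ) : QL := Polynomial.C p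

/-- A polynomial in the variable `λ` alone, viewed in `ℂ[q,λ]`. -/
noncomputable def ofL (p : Polynomial ℂ) : QL := p.map (Polynomial.C : ℂ →+* Polynomial ℂ)

/-- The subspace `K₊` of `ℂ(q,λ)`: fractions `a/g` with `g(ζ,0) ≠ 0` for every
root of unity `ζ`. -/
def Kplus : Set QLField :=
  {x | ∃ a g : QL, (∀ ζ : ℂ, IsRootOfUnity ζ → (g.eval (0 : Polynomial ℂ)).eval ζ ≠ 0) ∧
    x = algebraMap QL QLField a / algebraMap QL QLField g}

/-- The subspace `K₋` of `ℂ(q,λ)`: fractions `a/(f₀·f₁)` where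
`f₀(q) = ∏_{s=1}^{N} (1 − ζ_s q)` with each `ζ_s` a root of unity, `f₁ ∈ ℂ[λ]` with
`f₁(0) ≠ 0`, and `deg_q a < N`. -/
def Kminus : Set QLField :=
  {x | ∃ (a : QL) (N : ℕ) (ζs : Fin N → ℂ) (f₁ : Polynomial ℂ),
    (∀ i, IsRootOfUnity (ζs i)) ∧ f₁.eval 0 ≠ 0 ∧
    (∀ k : ℕ, (a.coeff k).degree < (N : WithBot ℕ)) ∧
    x = algebraMap QL QLField a /
      algebraMap QL QLField
        (ofQ (∏ i, (1 - Polynomial.C (ζs i) * Polynomial.X)) * ofL f₁)}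

section Helpers

-- helpers
lemma isRootOfUnity_one : IsRootOfUnity 1 := ⟨1, one_pos, one_pow 1⟩

lemma IsRootOfUnity.ne_zero {ζ : ℂ} (h : IsRootOfUnity ζ) : ζ ≠ 0 := by
  obtain ⟨n, hn, h⟩ := h
  intro h0; rw [h0, zero_pow hn.ne'] at h; exact zero_ne_one h

lemma IsRootOfUnity.inv {ζ : ℂ} (h : IsRootOfUnity ζ) : IsRootOfUnity ζ⁻¹ := by
  obtain ⟨n, hn, h⟩ := h
  exact ⟨n, hn, by rw [inv_pow, h, inv_one]⟩

local notation "φ" => algebraMap QL QLField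

lemma phi_inj : Function.Injective (algebraMap QL QLField) :=
  IsFractionRing.injective QL QLField

lemma phi_ne_zero {x : QL} (h : x ≠ 0) : φ x ≠ 0 := by
  intro h0; exact h (phi_inj (by rw [h0, map_zero]))

lemma frac_eq {a b c d : QL} (hb : b ≠ 0) (hd : d ≠ 0) (h : a * d = c * b) :
    φ a / φ b = φ c / φ d := by
  rw [div_eq_div_iff (phi_ne_zero hb) (phi_ne_zero hd), ← map_mul, ← map_mul, h]

lemma frac_add {a b c d : QL} (hb : b ≠ 0) (hd : d ≠ 0) :
    φ a / φ b + φ c / φ d = φ (a * d + c * b) / φ (b * d) := by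
  rw [div_add_div _ _ (phi_ne_zero hb) (phi_ne_zero hd), ← map_mul, ← map_mul, ← map_mul, ← map_add, mul_comm b c]

lemma ofL_mul (p q : Polynomial ℂ) : ofL (p * q) = ofL p * ofL q := Polynomial.map_mul _
lemma ofQ_mul (p q : Polynomial ℂ) : ofQ (p * q) = ofQ p * ofQ q := map_mul _ _ _

lemma ofL_coeff (p : Polynomial ℂ) (k : ℕ) : (ofL p).coeff k = C (p.coeff k) :=
  Polynomial.coeff_map _ _

lemma ofL_ne_zero {p : Polynomial ℂ} (h : p ≠ 0) : ofL p ≠ 0 := by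
  intro h0
  exact h (Polynomial.map_injective _ Polynomial.C_injective (show p.map C = (0:Polynomial ℂ).map C by rw [Polynomial.map_zero]; exact h0))

lemma ofQ_ne_zero {p : Polynomial ℂ} (h : p ≠ 0) : ofQ p ≠ 0 := by
  intro h0; exact h (Polynomial.C_injective (R := Polynomial ℂ) (show Polynomial.C p = Polynomial.C 0 by rw [map_zero]; exact h0))

lemma evalζ0_mul (x y : QL) (ζ : ℂ) :
    (((x * y).eval 0).eval ζ) = ((x.eval 0).eval ζ) * ((y.eval 0).eval ζ) := by
  simp

lemma evalζ0_ofL (f : Polynomial ℂ) (ζ : ℂ) : (((ofL f).eval 0).eval ζ) = f.eval 0 := by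
  rw [ofL, Polynomial.eval_map, Polynomial.eval₂_at_zero, ← Polynomial.coeff_zero_eq_eval_zero,
    Polynomial.eval_C]

lemma evalζ0_ofQ (p : Polynomial ℂ) (ζ : ℂ) : (((ofQ p).eval 0).eval ζ) = p.eval ζ := by
  rw [ofQ, Polynomial.eval_C]


-- degree lemmas
lemma coeff_mul_ofQ (a : QL) (p : Polynomial ℂ) (k : ℕ) :
    (a * ofQ p).coeff k = a.coeff k * p := Polynomial.coeff_mul_C _ _ _

lemma coeff_ofL_mul (a : QL) (f : Polynomial ℂ) (N : ℕ)
    (h : ∀ k, (a.coeff k).degree < (N : WithBot ℕ)) :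
    ∀ k, ((a * ofL f).coeff k).degree < (N : WithBot ℕ) := by
  intro k
  rw [Polynomial.coeff_mul]
  refine lt_of_le_of_lt (Polynomial.degree_sum_le _ _) ?_
  rw [Finset.sup_lt_iff (by exact_mod_cast WithBot.bot_lt_coe N)]
  intro b _
  rw [ofL_coeff]
  refine lt_of_le_of_lt (le_trans (Polynomial.degree_mul_le _ _) ?_) (h b.1)
  calc (a.coeff b.1).degree + (C (f.coeff b.2)).degree
      ≤ (a.coeff b.1).degree + 0 := add_le_add_right Polynomial.degree_C_le _
    _ = (a.coeff b.1).degree := add_zero _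

lemma deg_lt_mul (a : QL) {N M : ℕ} (h : ∀ k, (a.coeff k).degree < (N : WithBot ℕ))
    (p : Polynomial ℂ) (hp : p.degree ≤ (M : WithBot ℕ)) (f : Polynomial ℂ) :
    ∀ k, ((a * ofQ p * ofL f).coeff k).degree < ((N + M : ℕ) : WithBot ℕ) := by
  intro k
  have e : a * ofQ p * ofL f = a * ofL f * ofQ p := by ring
  rw [e, coeff_mul_ofQ]
  refine lt_of_le_of_lt (Polynomial.degree_mul_le _ _) ?_
  have e2 : ((N + M : ℕ) : WithBot ℕ) = (N : WithBot ℕ) + (M : WithBot ℕ) := by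
    push_cast; rfl
  rw [e2]
  by_cases hp0 : p = 0
  · rw [hp0, Polynomial.degree_zero, WithBot.add_bot]
    exact bot_lt_iff_ne_bot.mpr (by simp)
  exact WithBot.add_lt_add_of_lt_of_le (Polynomial.degree_ne_bot.2 hp0)
    (coeff_ofL_mul a f N h k) hp

lemma degree_F_le (N : ℕ) (ζs : Fin N → ℂ) :
    (∏ i, (1 - C (ζs i) * X)).degree ≤ (N : WithBot ℕ) := by
  refine le_trans (Polynomial.degree_prod_le _ _) ?_
  calc ∑ i : Fin N, (1 - C (ζs i) * X).degree ≤ ∑ _i : Fin N, (1 : WithBot ℕ) := by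
        refine Finset.sum_le_sum fun i _ => ?_
        have e : (1 : Polynomial ℂ) - C (ζs i) * X = C (-ζs i) * X + C 1 := by
          rw [map_neg, map_one]; ring
        rw [e]; exact Polynomial.degree_linear_le
    _ = (N : WithBot ℕ) := by
        rw [Finset.sum_const, Finset.card_univ, Fintype.card_fin, nsmul_eq_mul, mul_one]

lemma prodF_ne_zero (N : ℕ) (ζs : Fin N → ℂ) :
    (∏ i, (1 - C (ζs i) * X)) ≠ 0 := by
  intro h
  have h2 := congrArg (Polynomial.eval 0) h
  simp [Polynomial.eval_prod] at h2

lemma g_ne_zero {g : QL} (hg : ∀ ζ : ℂ, IsRootOfUnity ζ → (g.eval (0 : Polynomial ℂ)).eval ζ ≠ 0) :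
    g ≠ 0 := by
  intro h; exact hg 1 isRootOfUnity_one (by simp [h])

lemma f₁_ne_zero {f₁ : Polynomial ℂ} (h : f₁.eval 0 ≠ 0) : f₁ ≠ 0 := by
  intro h0; exact h (by simp [h0])

lemma Kminus_den_ne_zero {N : ℕ} (ζs : Fin N → ℂ) {f₁ : Polynomial ℂ} (h : f₁.eval 0 ≠ 0) :
    ofQ (∏ i, (1 - C (ζs i) * X)) * ofL f₁ ≠ 0 :=
  mul_ne_zero (ofQ_ne_zero (prodF_ne_zero N ζs)) (ofL_ne_zero (f₁_ne_zero h))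

lemma zero_mem_Kplus : (0 : QLField) ∈ Kplus :=
  ⟨0, 1, fun ζ _ => by simp, by simp⟩

lemma zero_mem_Kminus : (0 : QLField) ∈ Kminus := by
  refine ⟨0, 0, Fin.elim0, 1, fun i => i.elim0, by simp, fun k => ?_, by simp⟩
  simp only [Polynomial.coeff_zero, Polynomial.degree_zero]
  exact_mod_cast WithBot.bot_lt_coe 0

lemma Kplus_add {x y : QLField} (hx : x ∈ Kplus) (hy : y ∈ Kplus) : x + y ∈ Kplus := by
  obtain ⟨a, g, hg, rfl⟩ := hx
  obtain ⟨a', g', hg', rfl⟩ := hy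
  refine ⟨a * g' + a' * g, g * g', fun ζ hζ => ?_, ?_⟩
  · rw [evalζ0_mul]; exact mul_ne_zero (hg ζ hζ) (hg' ζ hζ)
  · rw [frac_add (g_ne_zero hg) (g_ne_zero hg')]

lemma Kminus_add {x y : QLField} (hx : x ∈ Kminus) (hy : y ∈ Kminus) : x + y ∈ Kminus := by
  obtain ⟨a, N, ζs, f₁, hζ, hf₁, hdeg, rfl⟩ := hx
  obtain ⟨a', N', ζs', f₁', hζ', hf₁', hdeg', rfl⟩ := hy
  have hD := Kminus_den_ne_zero ζs hf₁
  have hD' := Kminus_den_ne_zero ζs' hf₁'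
  refine ⟨a * (ofQ (∏ i, (1 - C (ζs' i) * X)) * ofL f₁') +
      a' * (ofQ (∏ i, (1 - C (ζs i) * X)) * ofL f₁), N + N', Fin.append ζs ζs', f₁ * f₁',
      fun i => ?_, by simp [hf₁, hf₁'], fun k => ?_, ?_⟩
  · exact Fin.addCases (fun j => by simpa using hζ j) (fun j => by simpa using hζ' j) i
  · rw [Polynomial.coeff_add]
    refine lt_of_le_of_lt (Polynomial.degree_add_le _ _) (max_lt ?_ ?_)
    · have := deg_lt_mul a hdeg _ (degree_F_le N' ζs') f₁' k
      rwa [mul_assoc] at this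
    · have := deg_lt_mul a' hdeg' _ (degree_F_le N ζs) f₁ k
      rw [mul_assoc] at this
      rwa [Nat.add_comm N' N] at this
  · rw [frac_add hD hD']
    congr 2
    have e : (∏ i, (1 - C (Fin.append ζs ζs' i) * X)) =
        (∏ i, (1 - C (ζs i) * X)) * (∏ i, (1 - C (ζs' i) * X)) := by
      rw [Fin.prod_univ_add]
      congr 1 <;> exact Finset.prod_congr rfl fun j _ => by simp
    rw [e, ofQ_mul, ofL_mul]
    ring

lemma trailingCoeff_of_coeff_zero_ne_zero {R : Type*} [Semiring R] {p : Polynomial R}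
    (h : p.coeff 0 ≠ 0) : p.trailingCoeff = p.coeff 0 := by
  have h0 : p.natTrailingDegree = 0 := Polynomial.natTrailingDegree_eq_zero.2 (Or.inr h)
  rw [Polynomial.trailingCoeff, h0]

lemma coprime_factor {ζ : ℂ} (hζ : IsRootOfUnity ζ) {g₀ : Polynomial ℂ}
    (hg : ∀ ξ : ℂ, IsRootOfUnity ξ → g₀.eval ξ ≠ 0) :
    IsCoprime (1 - C ζ * X) g₀ := by
  set r := ζ⁻¹ with hr
  have hc : g₀.eval r ≠ 0 := hg r hζ.inv
  set c := g₀.eval r with hcdef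
  obtain ⟨w, hw⟩ := Polynomial.X_sub_C_dvd_sub_C_eval (a := r) (p := g₀)
  have h1 : C r * C ζ = 1 := by
    rw [← Polynomial.C_mul, inv_mul_cancel₀ hζ.ne_zero, Polynomial.C_1]
  have h2 : C c⁻¹ * C c = 1 := by
    rw [← Polynomial.C_mul, inv_mul_cancel₀ hc, Polynomial.C_1]
  refine ⟨C c⁻¹ * C r * w, C c⁻¹, ?_⟩
  linear_combination (C c⁻¹) * hw - (C c⁻¹ * w * X) * h1 + h2

lemma degree_F_eq (N : ℕ) (ζs : Fin N → ℂ) (hζ : ∀ i, IsRootOfUnity (ζs i)) :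
    (∏ i, (1 - C (ζs i) * X)).degree = (N : WithBot ℕ) := by
  rw [Polynomial.degree_prod]
  have e : ∀ i : Fin N, (1 - C (ζs i) * X).degree = 1 := by
    intro i
    have e2 : (1 : Polynomial ℂ) - C (ζs i) * X = C (-ζs i) * X + C 1 := by
      rw [map_neg, map_one]; ring
    rw [e2, Polynomial.degree_linear (neg_ne_zero.2 (hζ i).ne_zero)]
  rw [Finset.sum_congr rfl fun i _ => e i, Finset.sum_const, Finset.card_univ, Fintype.card_fin,
    nsmul_eq_mul, mul_one]

lemma inter_eq : Kplus ∩ Kminus = {0} := by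
  ext x
  constructor
  · rintro ⟨⟨a, g, hg, hxp⟩, ⟨b, N, ζs, f₁, hζ, hf₁, hdeg, hxm⟩⟩
    have hgne := g_ne_zero hg
    have hD := Kminus_den_ne_zero ζs hf₁
    set F : Polynomial ℂ := ∏ i, (1 - C (ζs i) * X) with hF
    have key : a * (ofQ F * ofL f₁) = b * g := by
      apply phi_inj
      have h := (div_eq_div_iff (phi_ne_zero hgne) (phi_ne_zero hD)).1 (hxp.symm.trans hxm)
      rwa [← map_mul, ← map_mul] at h
    have hb : b = 0 := by
      by_contra hb
      have tEq := congrArg Polynomial.trailingCoeff key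
      rw [Polynomial.trailingCoeff_mul, Polynomial.trailingCoeff_mul,
        Polynomial.trailingCoeff_mul] at tEq
      have hofQ : (ofQ F).trailingCoeff = F := by
        rw [trailingCoeff_of_coeff_zero_ne_zero, ofQ, Polynomial.coeff_C_zero]
        rw [ofQ, Polynomial.coeff_C_zero]; exact prodF_ne_zero N ζs
      have hf10 : f₁.coeff 0 ≠ 0 := by rwa [Polynomial.coeff_zero_eq_eval_zero]
      have hofL : (ofL f₁).trailingCoeff = C (f₁.coeff 0) := by
        rw [trailingCoeff_of_coeff_zero_ne_zero, ofL_coeff]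
        rw [ofL_coeff]; exact fun h => hf10 (Polynomial.C_injective (by rw [h, map_zero]))
      have hg0 : g.coeff 0 ≠ 0 := by
        intro h
        exact hg 1 isRootOfUnity_one
          (by rw [← Polynomial.coeff_zero_eq_eval_zero, h, Polynomial.eval_zero])
      have hgt : g.trailingCoeff = g.coeff 0 := trailingCoeff_of_coeff_zero_ne_zero hg0
      rw [hofQ, hofL, hgt] at tEq
      have hgRoU : ∀ ξ : ℂ, IsRootOfUnity ξ → (g.coeff 0).eval ξ ≠ 0 := by
        intro ξ hξ
        rw [Polynomial.coeff_zero_eq_eval_zero]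
        exact hg ξ hξ
      have hcop : IsCoprime F (g.coeff 0) :=
        IsCoprime.prod_left fun i _ => coprime_factor (hζ i) hgRoU
      have hdvd : F ∣ b.trailingCoeff * g.coeff 0 :=
        ⟨a.trailingCoeff * C (f₁.coeff 0), by linear_combination -tEq⟩
      have hdvd2 : F ∣ b.trailingCoeff := hcop.dvd_of_dvd_mul_right hdvd
      have hbt : b.trailingCoeff = 0 :=
        Polynomial.eq_zero_of_dvd_of_degree_lt hdvd2
          (by rw [degree_F_eq N ζs hζ]; exact hdeg _)
      exact hb (Polynomial.trailingCoeff_eq_zero.1 hbt)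
    rw [Set.mem_singleton_iff, hxm, hb, map_zero, zero_div]
  · rintro rfl
    exact ⟨zero_mem_Kplus, zero_mem_Kminus⟩

lemma q_division (a : QL) (r : ℂ) :
    ∃ b : QL, a = ofL (a.map (Polynomial.evalRingHom r)) + ofQ (X - C r) * b := by
  have hdvd : ofQ (X - C r) ∣ (a - ofL (a.map (Polynomial.evalRingHom r))) := by
    rw [ofQ, Polynomial.C_dvd_iff_dvd_coeff]
    intro k
    have e : (a - ofL (a.map (Polynomial.evalRingHom r))).coeff k =
        a.coeff k - C ((a.coeff k).eval r) := by
      rw [Polynomial.coeff_sub, ofL_coeff, Polynomial.coeff_map]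
      rfl
    rw [e]
    exact Polynomial.X_sub_C_dvd_sub_C_eval
  obtain ⟨b, hb⟩ := hdvd
  exact ⟨b, by linear_combination hb⟩

lemma map_eval_zero (a : QL) (r : ℂ) :
    (a.map (Polynomial.evalRingHom r)).eval 0 = (a.eval (0 : Polynomial ℂ)).eval r := by
  rw [Polynomial.eval_map, Polynomial.eval₂_at_zero, ← Polynomial.coeff_zero_eq_eval_zero]
  rfl

lemma main_ind (N : ℕ) : ∀ (a g : QL) (ζs : Fin N → ℂ) (f₁ : Polynomial ℂ),
    (∀ ζ : ℂ, IsRootOfUnity ζ → (g.eval (0 : Polynomial ℂ)).eval ζ ≠ 0) →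
    (∀ i, IsRootOfUnity (ζs i)) → f₁.eval 0 ≠ 0 →
    ∃ p ∈ Kplus, ∃ m ∈ Kminus,
      algebraMap QL QLField a /
        algebraMap QL QLField (g * ofQ (∏ i, (1 - C (ζs i) * X)) * ofL f₁) = p + m := by
  induction N with
  | zero =>
    intro a g ζs f₁ hg hζ hf₁
    refine ⟨_, ⟨a, g * ofQ (∏ i, (1 - C (ζs i) * X)) * ofL f₁, fun ζ hζ' => ?_, rfl⟩,
      0, zero_mem_Kminus, (add_zero _).symm⟩
    rw [evalζ0_mul, evalζ0_mul, evalζ0_ofL, evalζ0_ofQ]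
    have e : (∏ i : Fin 0, ((1 : Polynomial ℂ) - C (ζs i) * X)) = 1 := by simp
    rw [e]
    simpa using mul_ne_zero (mul_ne_zero (hg ζ hζ') one_ne_zero) hf₁
  | succ N ih =>
    intro a g ζs f₁ hg hζ hf₁
    have hgne := g_ne_zero hg
    set ζl := ζs (Fin.last N) with hζldef
    have hζl : IsRootOfUnity ζl := hζ _
    set r := ζl⁻¹ with hrdef
    set F : Polynomial ℂ := ∏ i : Fin N, (1 - C (ζs i.castSucc) * X) with hFdef
    have hprod : (∏ i : Fin (N + 1), (1 - C (ζs i) * X)) = F * (1 - C ζl * X) :=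
      Fin.prod_univ_castSucc _
    have hfac : (X - C r : Polynomial ℂ) = C (-r) * (1 - C ζl * X) := by
      have h1 : C r * C ζl = (1 : Polynomial ℂ) := by
        rw [← Polynomial.C_mul, inv_mul_cancel₀ hζl.ne_zero, Polynomial.C_1]
      rw [map_neg]
      linear_combination (-X : Polynomial ℂ) * h1
    -- divide a
    obtain ⟨b0, hb0⟩ := q_division a r
    set c : QL := ofL (a.map (Polynomial.evalRingHom r)) with hcdef
    set b' : QL := ofQ (C (-r)) * b0 with hb'def
    have hab : a = c + ofQ (1 - C ζl * X) * b' := by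
      rw [hb0, hfac, ofQ_mul]; ring
    -- divide g
    obtain ⟨w, hw⟩ := q_division g r
    set γ : Polynomial ℂ := g.map (Polynomial.evalRingHom r) with hγdef
    have hγ0 : γ.eval 0 ≠ 0 := by
      rw [hγdef, map_eval_zero]; exact hg r hζl.inv
    have hgw : g = ofL γ + ofQ (C (-r)) * ofQ (1 - C ζl * X) * w := by
      rw [hw, hfac, ofQ_mul]
    -- IH applications
    have hζc : ∀ i : Fin N, IsRootOfUnity (ζs i.castSucc) := fun i => hζ _
    have hf₁γ : (f₁ * γ).eval 0 ≠ 0 := by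
      rw [Polynomial.eval_mul]; exact mul_ne_zero hf₁ hγ0
    obtain ⟨p₂, hp₂, m₂, hm₂, e₂⟩ := ih b' g (fun i => ζs i.castSucc) f₁ hg hζc hf₁
    obtain ⟨p₃, hp₃, m₃, hm₃, e₃⟩ :=
      ih (-(c * ofQ (C (-r)) * w)) g (fun i => ζs i.castSucc) (f₁ * γ) hg hζc hf₁γ
    -- the explicit K₋ piece
    have hm₁mem : algebraMap QL QLField c /
        algebraMap QL QLField
          (ofQ (∏ i : Fin (N + 1), (1 - C (ζs i) * X)) * ofL (f₁ * γ)) ∈ Kminus := by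
      refine ⟨c, N + 1, ζs, f₁ * γ, hζ, hf₁γ, fun k => ?_, rfl⟩
      rw [hcdef, ofL_coeff]
      refine lt_of_le_of_lt Polynomial.degree_C_le ?_
      exact_mod_cast Nat.cast_lt.mpr (N.succ_pos)
    refine ⟨p₂ + p₃, Kplus_add hp₂ hp₃, _ + (m₂ + m₃), Kminus_add hm₁mem (Kminus_add hm₂ hm₃), ?_⟩
    have rearr : p₂ + p₃ + (algebraMap QL QLField c /
        algebraMap QL QLField
          (ofQ (∏ i : Fin (N + 1), (1 - C (ζs i) * X)) * ofL (f₁ * γ)) + (m₂ + m₃)) =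
        algebraMap QL QLField c /
          algebraMap QL QLField
            (ofQ (∏ i : Fin (N + 1), (1 - C (ζs i) * X)) * ofL (f₁ * γ)) +
          (p₂ + m₂) + (p₃ + m₃) := by ring
    rw [rearr, ← e₂, ← e₃]
    -- nonzeroness
    have hu : (1 - C ζl * X : Polynomial ℂ) ≠ 0 := fun h => by
      simpa using congrArg (Polynomial.eval 0) h
    have hFne : F ≠ 0 := prodF_ne_zero N _
    have hLne : ofL f₁ ≠ 0 := ofL_ne_zero (f₁_ne_zero hf₁)
    have hΓne : ofL γ ≠ 0 := ofL_ne_zero (f₁_ne_zero hγ0)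
    have hG : g * ofQ (∏ i : Fin (N + 1), (1 - C (ζs i) * X)) * ofL f₁ ≠ 0 :=
      mul_ne_zero (mul_ne_zero hgne (ofQ_ne_zero (prodF_ne_zero _ _))) hLne
    have hD₁ : ofQ (∏ i : Fin (N + 1), (1 - C (ζs i) * X)) * ofL (f₁ * γ) ≠ 0 :=
      Kminus_den_ne_zero ζs hf₁γ
    have hG' : g * ofQ F * ofL f₁ ≠ 0 :=
      mul_ne_zero (mul_ne_zero hgne (ofQ_ne_zero hFne)) hLne
    have hG'' : g * ofQ F * ofL (f₁ * γ) ≠ 0 :=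
      mul_ne_zero (mul_ne_zero hgne (ofQ_ne_zero hFne)) (ofL_ne_zero (f₁_ne_zero hf₁γ))
    rw [frac_add hD₁ hG', frac_add (mul_ne_zero hD₁ hG') hG'']
    refine frac_eq hG (mul_ne_zero (mul_ne_zero hD₁ hG') hG'') ?_
    rw [hprod, ofQ_mul, ofL_mul, hab, hgw]
    ring

end Helpers

/-- The localization `S⁻¹ℂ[q,λ]` decomposes as the direct sum `K₊ ⊕ K₋`: the two subspaces
intersect trivially, and every fraction `a/(g·f₀·f₁)` with allowed denominator is the sum of
an element of `K₊` and an element of `K₋`. -/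
theorem twoVariable_polarization :
    Kplus ∩ Kminus = {0} ∧
    ∀ (a g : QL) (N : ℕ) (ζs : Fin N → ℂ) (f₁ : Polynomial ℂ),
      (∀ ζ : ℂ, IsRootOfUnity ζ → (g.eval (0 : Polynomial ℂ)).eval ζ ≠ 0) →
      (∀ i, IsRootOfUnity (ζs i)) → f₁.eval 0 ≠ 0 →
      ∃ p ∈ Kplus, ∃ m ∈ Kminus,
        algebraMap QL QLField a /
          algebraMap QL QLField
            (g * ofQ (∏ i, (1 - Polynomial.C (ζs i) * Polynomial.X)) * ofL f₁) = p + m :=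
  ⟨inter_eq, fun a g N ζs f₁ hg hζ hf₁ => main_ind N a g ζs f₁ hg hζ hf₁⟩
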